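/- Let γ > 0 and m ≠ 0. Define G(x) = F̂(x) - F̂(γ/x) for x > 0, where F̂ is a differentiable function on (0,∞) with F̂'(x) = -(x²+1)^{m/2}(x² - γ)/x². Then G'(x) = (γ/x² - 1)·((x²+1)^{m/2} - (γ²/x² + 1)^{m/2}), and G'(x) = 0 for x > 0 if and only if x = √γ. -/

import Mathlib

open Real

/-- Lemma 4.4, λ > 0 case: if `F̂' (x) = -(x²+1)^{m/2}(x² - γ)/x²` and
`G(x) = F̂(x) - F̂(γ/x)`, then `G'(x) = (γ/x² - 1)((x²+1)^{m/2} - (γ²/x² + 1)^{m/2})`,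
which vanishes for `x > 0` iff `x = √γ`. -/
theorem deriv_G_parity (γ m : ℝ) (hγ : 0 < γ) (hm : m ≠ 0) (Fhat : ℝ → ℝ)
    (hF : ∀ x > (0 : ℝ),
      HasDerivAt Fhat (-(x ^ 2 + 1) ^ (m / 2) * (x ^ 2 - γ) / x ^ 2) x) :
    ∀ x > (0 : ℝ),
      deriv (fun t => Fhat t - Fhat (γ / t)) x
          = (γ / x ^ 2 - 1) * ((x ^ 2 + 1) ^ (m / 2) - (γ ^ 2 / x ^ 2 + 1) ^ (m / 2)) ∧
        (deriv (fun t => Fhat t - Fhat (γ / t)) x = 0 ↔ x = Real.sqrt γ) := by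
  intro x hx
  have hx0 : x ≠ 0 := ne_of_gt hx
  have hgx : (0 : ℝ) < γ / x := div_pos hγ hx
  -- derivative of inner map t ↦ γ / t
  have hinner : HasDerivAt (fun t : ℝ => γ / t) (-(γ / x ^ 2)) x := by
    have := (hasDerivAt_inv hx0).const_mul γ
    simpa [div_eq_mul_inv, mul_comm, neg_div] using this
  have hcomp : HasDerivAt (fun t => Fhat (γ / t))
      ((-((γ / x) ^ 2 + 1) ^ (m / 2) * ((γ / x) ^ 2 - γ) / (γ / x) ^ 2) * (-(γ / x ^ 2))) x :=
    (hF (γ / x) hgx).comp x hinner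
  have hG : HasDerivAt (fun t => Fhat t - Fhat (γ / t))
      ((-(x ^ 2 + 1) ^ (m / 2) * (x ^ 2 - γ) / x ^ 2)
        - (-((γ / x) ^ 2 + 1) ^ (m / 2) * ((γ / x) ^ 2 - γ) / (γ / x) ^ 2) * (-(γ / x ^ 2))) x :=
    (hF x hx).sub hcomp
  have hsq : (γ / x) ^ 2 + 1 = γ ^ 2 / x ^ 2 + 1 := by rw [div_pow]
  have hderiv : deriv (fun t => Fhat t - Fhat (γ / t)) x
      = (γ / x ^ 2 - 1) * ((x ^ 2 + 1) ^ (m / 2) - (γ ^ 2 / x ^ 2 + 1) ^ (m / 2)) := by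
    rw [hG.deriv, hsq]
    have hγx0 : γ / x ≠ 0 := ne_of_gt hgx
    set A := (x ^ 2 + 1) ^ (m / 2)
    set B := (γ ^ 2 / x ^ 2 + 1) ^ (m / 2)
    field_simp
    ring
  refine ⟨hderiv, ?_⟩
  rw [hderiv]
  constructor
  · intro h
    rcases mul_eq_zero.1 h with h1 | h2
    · have hx2 : x ^ 2 = γ := by
        field_simp at h1
        linarith
      rw [← hx2, sqrt_sq hx.le]
    · have hA : (x ^ 2 + 1) ^ (m / 2) = (γ ^ 2 / x ^ 2 + 1) ^ (m / 2) := by linarith [sub_eq_zero.1 h2]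
      have hbase : x ^ 2 + 1 = γ ^ 2 / x ^ 2 + 1 := by
        have h1 : (0 : ℝ) ≤ x ^ 2 + 1 := by positivity
        have h2' : (0 : ℝ) ≤ γ ^ 2 / x ^ 2 + 1 := by positivity
        have hm2 : m / 2 ≠ 0 := by simpa using hm
        calc x ^ 2 + 1 = ((x ^ 2 + 1) ^ (m / 2)) ^ (m / 2)⁻¹ :=
              (Real.rpow_rpow_inv h1 hm2).symm
          _ = ((γ ^ 2 / x ^ 2 + 1) ^ (m / 2)) ^ (m / 2)⁻¹ := by rw [hA]
          _ = γ ^ 2 / x ^ 2 + 1 := Real.rpow_rpow_inv h2' hm2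
      have hx4 : x ^ 2 * x ^ 2 = γ ^ 2 := by
        field_simp at hbase
        nlinarith
      have hx2 : x ^ 2 = γ := by nlinarith [sq_nonneg x, hγ.le, sq_nonneg (x^2 - γ)]
      rw [← hx2, sqrt_sq hx.le]
  · intro h
    have hx2 : x ^ 2 = γ := by rw [h, sq_sqrt hγ.le]
    have : γ / x ^ 2 - 1 = 0 := by rw [hx2]; field_simp; norm_num
    rw [this, zero_mul]
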